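/- Let Δ > 0, b ∈ (0,1), and let i ≥ 2 be an integer. With h_k as defined from b, Δ, i, one has h_{i−1} − h₀ = (2Δ/(3i)) · (3i−2)·(1−b)²·(i−1) / ((2bi−b+1)·(b+2i−1)); in particular h₀ < h_{i−1}. -/

import Mathlib

noncomputable section

/-- The ratio h_k = w_k / u_k of the per-layer cost weight to the per-layer volume
weight in the two-dimensional staircase optimization, with c₀ = 1/(1−b),
c₁ = b/(1−b)², c₂ = (b+b²)/(1−b)³. -/
def hseq (Δ b : ℝ) (i k : ℕ) : ℝ :=
  (2 * Δ / (3 * (i : ℝ))) *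
    (3 * (i : ℝ) ^ 2 * ((b + b ^ 2) / (1 - b) ^ 3) +
      (6 * (i : ℝ) * (k : ℝ) + 3 * (i : ℝ)) * (b / (1 - b) ^ 2) +
      (1 + 3 * (k : ℝ) + 3 * (k : ℝ) ^ 2) * (1 / (1 - b))) /
    ((1 + 2 * (k : ℝ)) * (1 / (1 - b)) + 2 * (i : ℝ) * (b / (1 - b) ^ 2))

/-- h_{i−1} − h₀ = (2Δ/(3i)) · (3i−2)(1−b)²(i−1) / ((2bi−b+1)(b+2i−1)); in
particular h₀ < h_{i−1}. -/
theorem hseq_ends_diff (Δ b : ℝ) (hΔ : 0 < Δ) (hb : 0 < b) (hb1 : b < 1)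
    (i : ℕ) (hi : 2 ≤ i) :
    hseq Δ b i (i - 1) - hseq Δ b i 0 =
      (2 * Δ / (3 * (i : ℝ))) *
        ((3 * (i : ℝ) - 2) * (1 - b) ^ 2 * ((i : ℝ) - 1)) /
        ((2 * b * (i : ℝ) - b + 1) * (b + 2 * (i : ℝ) - 1)) ∧
    hseq Δ b i 0 < hseq Δ b i (i - 1) := by
  have hi2 : (2:ℝ) ≤ (i:ℝ) := by exact_mod_cast hi
  have hcast : ((i - 1 : ℕ) : ℝ) = (i:ℝ) - 1 := by
    have : 1 ≤ i := by omega
    push_cast [this]; ring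
  have h1b : (0:ℝ) < 1 - b := by linarith
  have h1 : (1 - b) ≠ 0 := ne_of_gt h1b
  have hipos : (0:ℝ) < (i:ℝ) := by linarith
  have hd1 : 0 < 2 * b * (i:ℝ) - b + 1 := by nlinarith
  have hd2 : 0 < b + 2 * (i:ℝ) - 1 := by nlinarith
  have key : hseq Δ b i (i - 1) - hseq Δ b i 0 =
      (2 * Δ / (3 * (i : ℝ))) *
        ((3 * (i : ℝ) - 2) * (1 - b) ^ 2 * ((i : ℝ) - 1)) /
        ((2 * b * (i : ℝ) - b + 1) * (b + 2 * (i : ℝ) - 1)) := by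
    unfold hseq
    rw [hcast]
    push_cast
    have e1 : (1 + 2 * ((i:ℝ) - 1)) * (1 / (1 - b)) + 2 * (i : ℝ) * (b / (1 - b) ^ 2)
        = (b + 2 * (i:ℝ) - 1) / (1 - b)^2 := by field_simp; ring
    have e0 : (1 + 2 * (0:ℝ)) * (1 / (1 - b)) + 2 * (i : ℝ) * (b / (1 - b) ^ 2)
        = (2 * b * (i:ℝ) - b + 1) / (1 - b)^2 := by field_simp; ring
    rw [e1, e0]
    field_simp [show b * (2 * (i:ℝ) - 1) + 1 ≠ 0 by nlinarith]
    ring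
  refine ⟨key, ?_⟩
  have : 0 < (2 * Δ / (3 * (i : ℝ))) *
        ((3 * (i : ℝ) - 2) * (1 - b) ^ 2 * ((i : ℝ) - 1)) /
        ((2 * b * (i : ℝ) - b + 1) * (b + 2 * (i : ℝ) - 1)) := by
    apply div_pos
    · apply mul_pos
      · positivity
      · apply mul_pos (mul_pos (by linarith) (by positivity)) (by linarith)
    · exact mul_pos hd1 hd2
  linarith [key ▸ this]
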